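/- Let k_d, k ≥ 1. The matrix D_2 with entries D_2(s,t) = 1/(k_d + s - t)! for 1 ≤ s, t ≤ k_d (with the convention 1/m! = 0 when m < 0) has nonzero determinant; indeed det D_2 equals det D_3 divided by the product over s of (k_d+s-1)! times the product over t of (t-1)!, where D_3(s,t) = binomial(k_d + s - 1, k_d + s - t). -/
import Mathlib


open Matrix Finset

private lemma vand_aux (kd s t : ℕ) (ht : t < kd) :
    (kd + s).choose t
      = ∑ j ∈ Finset.range kd, if j ≤ t then s.choose j * kd.choose (t - j) else 0 := by
  rw [add_comm, Nat.add_choose_eq, Finset.Nat.sum_antidiagonal_eq_sum_range_succ_mk]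
  rw [← Finset.sum_subset (Finset.range_subset_range.2 ht) (fun x _ hx => ?_)]
  · exact Finset.sum_congr rfl fun j hj => by
      rw [if_pos (Nat.lt_succ_iff.mp (Finset.mem_range.mp hj))]
  · rw [if_neg]
    exact fun h => hx (Finset.mem_range.mpr (Nat.lt_succ_of_le h))

private lemma detD3_eq_one (kd : ℕ) :
    (Matrix.of fun s t : Fin kd =>
        ((Nat.choose (kd + s.val) (kd + s.val - t.val) : ℕ) : ℚ)).det = 1 := by
  have hD3 : (Matrix.of fun s t : Fin kd =>
        ((Nat.choose (kd + s.val) (kd + s.val - t.val) : ℕ) : ℚ))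
      = (Matrix.of fun s j : Fin kd => ((s.val.choose j.val : ℕ) : ℚ))
        * (Matrix.of fun j t : Fin kd =>
            if j.val ≤ t.val then ((kd.choose (t.val - j.val) : ℕ) : ℚ) else 0) := by
    ext s t
    have ht : t.val ≤ kd + s.val := le_of_lt (lt_of_lt_of_le t.isLt (Nat.le_add_right _ _))
    simp only [Matrix.mul_apply, Matrix.of_apply]
    rw [Nat.choose_symm ht]
    rw [vand_aux kd s.val t.val t.isLt, Nat.cast_sum, ← Fin.sum_univ_eq_sum_range]
    refine Finset.sum_congr rfl fun j _ => ?_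
    split_ifs with h <;> simp
  rw [hD3, Matrix.det_mul]
  have h1 : (Matrix.of fun s j : Fin kd => ((s.val.choose j.val : ℕ) : ℚ)).det = 1 := by
    rw [Matrix.det_of_lowerTriangular _ (fun i j hij => ?_)]
    · simp
    · have hij' : i < j := hij
      simp only [Matrix.of_apply]
      exact_mod_cast Nat.choose_eq_zero_of_lt hij'
  have h2 : (Matrix.of fun j t : Fin kd =>
      if j.val ≤ t.val then ((kd.choose (t.val - j.val) : ℕ) : ℚ) else 0).det = 1 := by
    rw [Matrix.det_of_upperTriangular (fun i j hij => ?_)]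
    · simp
    · have hji : (j : ℕ) < i := hij
      simp only [Matrix.of_apply]
      rw [if_neg (by omega)]
  rw [h1, h2, one_mul]

/-- The matrix `D₂` with entries `D₂(s,t) = 1/(k_d + s - t)!` for `1 ≤ s,t ≤ k_d`
(here 0-based, the argument `k_d + s - t ≥ 1` is always nonnegative) has nonzero
determinant; indeed `det D₂ = det D₃ · (∏_t (t-1)!) / (∏_s (k_d+s-1)!)` where
`D₃(s,t) = C(k_d + s - 1, k_d + s - t)`. -/
theorem matD2_det_ne_zero (k kd : ℕ) (hkd : 1 ≤ kd) (hk : 1 ≤ k) :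
    (Matrix.of fun s t : Fin kd =>
        (1 / (Nat.factorial (kd + s.val - t.val) : ℚ))).det ≠ 0
    ∧ (Matrix.of fun s t : Fin kd =>
        (1 / (Nat.factorial (kd + s.val - t.val) : ℚ))).det
      = (Matrix.of fun s t : Fin kd =>
          ((Nat.choose (kd + s.val) (kd + s.val - t.val) : ℕ) : ℚ)).det
        * (∏ t : Fin kd, (Nat.factorial t.val : ℚ))
        / (∏ s : Fin kd, (Nat.factorial (kd + s.val) : ℚ)) := by
  have hfac : ∀ n : ℕ, ((n.factorial : ℚ)) ≠ 0 := fun n => by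
    exact_mod_cast n.factorial_ne_zero
  have hD2 : (Matrix.of fun s t : Fin kd =>
        (1 / (Nat.factorial (kd + s.val - t.val) : ℚ)))
      = Matrix.diagonal (fun s : Fin kd => ((Nat.factorial (kd + s.val) : ℚ))⁻¹)
        * ((Matrix.of fun s t : Fin kd =>
            ((Nat.choose (kd + s.val) (kd + s.val - t.val) : ℕ) : ℚ))
          * Matrix.diagonal (fun t : Fin kd => (Nat.factorial t.val : ℚ))) := by
    ext s t
    rw [Matrix.diagonal_mul, Matrix.mul_diagonal]
    simp only [Matrix.of_apply]
    have ht : t.val ≤ kd + s.val := le_of_lt (lt_of_lt_of_le t.isLt (Nat.le_add_right _ _))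
    have key := Nat.choose_mul_factorial_mul_factorial (Nat.sub_le (kd + s.val) t.val)
    rw [Nat.sub_sub_self ht] at key
    have keyq : ((Nat.choose (kd + s.val) (kd + s.val - t.val) : ℕ) : ℚ)
        * (Nat.factorial (kd + s.val - t.val) : ℚ) * (Nat.factorial t.val : ℚ)
        = (Nat.factorial (kd + s.val) : ℚ) := by exact_mod_cast key
    have hC : ((Nat.choose (kd + s.val) (kd + s.val - t.val) : ℕ) : ℚ)
        = (Nat.factorial (kd + s.val) : ℚ)
          / ((Nat.factorial (kd + s.val - t.val) : ℚ) * (Nat.factorial t.val : ℚ)) := by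
      rw [eq_div_iff (mul_ne_zero (hfac _) (hfac _))]
      linarith [keyq]
    rw [hC]
    field_simp
  have hdet : (Matrix.of fun s t : Fin kd =>
        (1 / (Nat.factorial (kd + s.val - t.val) : ℚ))).det
      = (∏ s : Fin kd, ((Nat.factorial (kd + s.val) : ℚ))⁻¹)
        * ((Matrix.of fun s t : Fin kd =>
            ((Nat.choose (kd + s.val) (kd + s.val - t.val) : ℕ) : ℚ)).det
          * ∏ t : Fin kd, (Nat.factorial t.val : ℚ)) := by
    rw [hD2, Matrix.det_mul, Matrix.det_mul, Matrix.det_diagonal, Matrix.det_diagonal]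
  have hprodne : (∏ s : Fin kd, (Nat.factorial (kd + s.val) : ℚ)) ≠ 0 :=
    Finset.prod_ne_zero_iff.mpr fun s _ => hfac _
  have hprodtne : (∏ t : Fin kd, (Nat.factorial t.val : ℚ)) ≠ 0 :=
    Finset.prod_ne_zero_iff.mpr fun t _ => hfac _
  have heq : (Matrix.of fun s t : Fin kd =>
        (1 / (Nat.factorial (kd + s.val - t.val) : ℚ))).det
      = (Matrix.of fun s t : Fin kd =>
          ((Nat.choose (kd + s.val) (kd + s.val - t.val) : ℕ) : ℚ)).det
        * (∏ t : Fin kd, (Nat.factorial t.val : ℚ))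
        / (∏ s : Fin kd, (Nat.factorial (kd + s.val) : ℚ)) := by
    rw [hdet, Finset.prod_inv_distrib]
    field_simp
  refine ⟨?_, heq⟩
  rw [heq, detD3_eq_one, one_mul]
  exact div_ne_zero hprodtne hprodne
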